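/- For all natural n ≥ 1, the generalized fibonomial at argument 1/2 satisfies {1/2 choose n}_{s,t} = {1/2}_{s,t} · {2n choose n}_{s,t} · (−1)^{n+1}/(4^{n−1}·⟨n⟩_{s,t}·{2n−1}_{s,t}) · L_{n−1}(s,t), where L_m(s,t) = (−t)^{−m²/2}·4^m / (⟨m⟩_{s,t}! · ∏_{j=0}^{m−1}(φ^{j+1/2} + φ'^{j+1/2})). -/

import Mathlib

noncomputable section
open Real

/-- Generalized Fibonacci function {α} = (φ^α − φ'^α)/(φ−φ'), real powers. -/
def genFibFun (φ φ' α : ℝ) : ℝ := (φ ^ α - φ' ^ α) / (φ - φ')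

/-- Generalized Lucas function ⟨α⟩ = φ^α + φ'^α. -/
def genLucasFun (φ φ' α : ℝ) : ℝ := φ ^ α + φ' ^ α

def fibtorial (φ φ' : ℝ) (n : ℕ) : ℝ := ∏ j ∈ Finset.range n, genFibFun φ φ' ((j : ℝ) + 1)

def lucastorial (φ φ' : ℝ) (n : ℕ) : ℝ := ∏ j ∈ Finset.range n, genLucasFun φ φ' ((j : ℝ) + 1)

/-- L_m(s,t) = (−t)^{−m²/2}·4^m / (⟨m⟩! · ∏_{j=0}^{m−1} (φ^{j+1/2} + φ'^{j+1/2})). -/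
def Lfun (t φ φ' : ℝ) (m : ℕ) : ℝ :=
  (-t) ^ (-(m ^ 2 : ℝ) / 2) * 4 ^ m /
    (lucastorial φ φ' m * ∏ j ∈ Finset.range m, (φ ^ ((j : ℝ) + 1 / 2) + φ' ^ ((j : ℝ) + 1 / 2)))

/-- Generalized fibonomial {α choose n} = {α}{α−1}⋯{α−n+1}/{n}!. -/
def genFibonomial (φ φ' α : ℝ) (n : ℕ) : ℝ :=
  (∏ j ∈ Finset.range n, genFibFun φ φ' (α - j)) / fibtorial φ φ' n

/-- Central fibonomial coefficient {2n choose n}. -/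
def centralFibonomial (φ φ' : ℝ) (n : ℕ) : ℝ :=
  fibtorial φ φ' (2 * n) / (fibtorial φ φ' n * fibtorial φ φ' n)

section Helpers

variable {t φ φ' : ℝ}

lemma genFibFun_pos (hφ' : 0 < φ') (hlt : φ' < φ) {α : ℝ} (hα : 0 < α) :
    0 < genFibFun φ φ' α := by
  have h := Real.rpow_lt_rpow hφ'.le hlt hα
  exact div_pos (sub_pos.2 h) (sub_pos.2 hlt)

lemma genFibFun_neg (hφ' : 0 < φ') (hlt : φ' < φ) (hmul : φ * φ' = -t) (α : ℝ) :
    genFibFun φ φ' (-α) = -((-t) ^ (-α)) * genFibFun φ φ' α := by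
  have hφ : 0 < φ := hφ'.trans hlt
  have ht : (0:ℝ) < -t := hmul ▸ mul_pos hφ hφ'
  have h1 : φ ^ α ≠ 0 := (Real.rpow_pos_of_pos hφ α).ne'
  have h2 : φ' ^ α ≠ 0 := (Real.rpow_pos_of_pos hφ' α).ne'
  have hd : φ - φ' ≠ 0 := sub_ne_zero.2 hlt.ne'
  unfold genFibFun
  rw [Real.rpow_neg hφ.le, Real.rpow_neg hφ'.le, Real.rpow_neg ht.le, ← hmul,
      Real.mul_rpow hφ.le hφ'.le]
  field_simp
  ring

lemma genFibFun_double (hφ' : 0 < φ') (hlt : φ' < φ) (α : ℝ) :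
    genFibFun φ φ' (2 * α) = genFibFun φ φ' α * (φ ^ α + φ' ^ α) := by
  have hφ : 0 < φ := hφ'.trans hlt
  have hd : φ - φ' ≠ 0 := sub_ne_zero.2 hlt.ne'
  unfold genFibFun
  rw [two_mul, Real.rpow_add hφ, Real.rpow_add hφ']
  field_simp
  ring

lemma core_identity (hφ' : 0 < φ') (hlt : φ' < φ) (n : ℕ) :
    (∏ j ∈ Finset.range n, genFibFun φ φ' (2 * (j:ℝ) + 1)) *
      (fibtorial φ φ' n * lucastorial φ φ' n) = fibtorial φ φ' (2 * n) := by
  induction n with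
  | zero => simp [fibtorial, lucastorial]
  | succ n ih =>
      have h2 : 2 * (n + 1) = (2 * n + 1) + 1 := by ring
      rw [h2]
      unfold fibtorial lucastorial at *
      rw [Finset.prod_range_succ, Finset.prod_range_succ, Finset.prod_range_succ,
          Finset.prod_range_succ, Finset.prod_range_succ]
      have hdb : genFibFun φ φ' (2 * ((n:ℝ) + 1)) =
          genFibFun φ φ' ((n:ℝ) + 1) * (φ ^ ((n:ℝ)+1) + φ' ^ ((n:ℝ)+1)) :=
        genFibFun_double hφ' hlt _
      have hc1 : ((2 * n + 1 : ℕ) : ℝ) + 1 = 2 * ((n:ℝ) + 1) := by push_cast; ring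
      have hc2 : ((2 * n : ℕ) : ℝ) + 1 = 2 * (n:ℝ) + 1 := by push_cast; ring
      rw [hc1, hc2, hdb]
      rw [← ih]
      unfold genLucasFun
      ring

lemma sum_half (m : ℕ) : ∑ j ∈ Finset.range m, ((j:ℝ) + 1/2) = (m:ℝ)^2 / 2 := by
  induction m with
  | zero => simp
  | succ m ih => rw [Finset.sum_range_succ, ih]; push_cast; ring

lemma prod_rpow_t (ht : (0:ℝ) < -t) (m : ℕ) :
    ∏ j ∈ Finset.range m, (-t) ^ (-((j:ℝ) + 1/2)) = (-t) ^ (-((m:ℝ)^2)/2) := by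
  induction m with
  | zero => simp
  | succ m ih =>
      rw [Finset.prod_range_succ, ih, ← Real.rpow_add ht]
      congr 1
      push_cast
      ring

lemma prod_half_shift (hφ' : 0 < φ') (hlt : φ' < φ) (m : ℕ) :
    (∏ j ∈ Finset.range m, genFibFun φ φ' ((j:ℝ) + 1/2)) *
      (∏ j ∈ Finset.range m, (φ ^ ((j:ℝ) + 1/2) + φ' ^ ((j:ℝ) + 1/2))) =
    ∏ j ∈ Finset.range m, genFibFun φ φ' (2 * (j:ℝ) + 1) := by
  rw [← Finset.prod_mul_distrib]
  refine Finset.prod_congr rfl fun j _ => ?_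
  have := genFibFun_double hφ' hlt ((j:ℝ) + 1/2)
  rw [← this]
  congr 1
  ring

lemma prod_half_main (hφ' : 0 < φ') (hlt : φ' < φ) (hmul : φ * φ' = -t) (m : ℕ) :
    ∏ j ∈ Finset.range (m+1), genFibFun φ φ' (1/2 - (j:ℝ)) =
      genFibFun φ φ' (1/2) * ((-1:ℝ)^m * (-t) ^ (-((m:ℝ)^2)/2) *
        ∏ j ∈ Finset.range m, genFibFun φ φ' ((j:ℝ) + 1/2)) := by
  have ht : (0:ℝ) < -t := hmul ▸ mul_pos (hφ'.trans hlt) hφ'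
  rw [Finset.prod_range_succ']
  have h0 : (1/2 : ℝ) - ((0:ℕ):ℝ) = 1/2 := by norm_num
  rw [h0]
  have hterm : ∀ j ∈ Finset.range m, genFibFun φ φ' (1/2 - ((j+1:ℕ):ℝ)) =
      (-1) * ((-t) ^ (-((j:ℝ) + 1/2)) * genFibFun φ φ' ((j:ℝ) + 1/2)) := by
    intro j _
    have harg : (1/2 : ℝ) - ((j+1:ℕ):ℝ) = -((j:ℝ) + 1/2) := by push_cast; ring
    rw [harg, genFibFun_neg hφ' hlt hmul]
    ring
  rw [Finset.prod_congr rfl hterm, Finset.prod_mul_distrib, Finset.prod_mul_distrib,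
      Finset.prod_const, prod_rpow_t ht, Finset.card_range]
  ring

lemma fibtorial_pos (hφ' : 0 < φ') (hlt : φ' < φ) (n : ℕ) : 0 < fibtorial φ φ' n :=
  Finset.prod_pos fun j _ => genFibFun_pos hφ' hlt (by positivity)

lemma lucastorial_pos (hφ' : 0 < φ') (hlt : φ' < φ) (n : ℕ) : 0 < lucastorial φ φ' n :=
  Finset.prod_pos fun j _ =>
    add_pos (Real.rpow_pos_of_pos (hφ'.trans hlt) _) (Real.rpow_pos_of_pos hφ' _)

end Helpers

theorem genFibonomial_half (s t : ℝ) (hs : 0 < s) (ht : t < 0)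
    (hdisc : s ^ 2 + 4 * t > 0) (φ φ' : ℝ)
    (hφ : φ = (s + Real.sqrt (s ^ 2 + 4 * t)) / 2)
    (hφ' : φ' = (s - Real.sqrt (s ^ 2 + 4 * t)) / 2)
    (n : ℕ) (hn : 1 ≤ n) :
    genFibonomial φ φ' (1 / 2) n =
      genFibFun φ φ' (1 / 2) * centralFibonomial φ φ' n *
        ((-1 : ℝ) ^ (n + 1) /
          (4 ^ (n - 1) * genLucasFun φ φ' n * genFibFun φ φ' ((2 * n - 1 : ℕ) : ℝ))) *
        Lfun t φ φ' (n - 1) := by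
  obtain ⟨m, rfl⟩ : ∃ m, n = m + 1 := ⟨n - 1, (Nat.succ_pred_eq_of_pos hn).symm⟩
  set r := Real.sqrt (s ^ 2 + 4 * t) with hr
  have hr0 : 0 < r := Real.sqrt_pos.2 hdisc
  have hr2 : r ^ 2 = s ^ 2 + 4 * t := Real.sq_sqrt hdisc.le
  have hrs : r < s := by nlinarith
  have hφ'pos : 0 < φ' := by rw [hφ']; linarith
  have hlt : φ' < φ := by rw [hφ, hφ']; linarith
  have hφpos : 0 < φ := hφ'pos.trans hlt
  have hmul : φ * φ' = -t := by rw [hφ, hφ']; linear_combination (-(1:ℝ)/4) * hr2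
  have htpos : (0:ℝ) < -t := by linarith
  -- notation
  have hsub : 2 * (m + 1) - 1 = 2 * m + 1 := by omega
  have hcastG : ((2 * (m + 1) - 1 : ℕ) : ℝ) = 2 * (m:ℝ) + 1 := by rw [hsub]; push_cast; ring
  have hcastL : (((m+1 : ℕ)) : ℝ) = (m:ℝ) + 1 := by push_cast; ring
  simp only [Nat.add_sub_cancel]
  unfold genFibonomial centralFibonomial Lfun
  rw [prod_half_main hφ'pos hlt hmul m, hcastG, hcastL]
  -- core identity for n = m+1
  have hcore := core_identity (φ := φ) (φ' := φ') hφ'pos hlt (m + 1)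
  rw [Finset.prod_range_succ] at hcore
  have hluc : lucastorial φ φ' (m + 1) =
      lucastorial φ φ' m * genLucasFun φ φ' ((m:ℝ) + 1) := Finset.prod_range_succ _ _
  rw [hluc] at hcore
  rw [← hcore, ← prod_half_shift hφ'pos hlt m]
  -- nonvanishing
  have hf : fibtorial φ φ' (m+1) ≠ 0 := (fibtorial_pos hφ'pos hlt _).ne'
  have hl : lucastorial φ φ' m ≠ 0 := (lucastorial_pos hφ'pos hlt _).ne'
  have hL : genLucasFun φ φ' ((m:ℝ) + 1) ≠ 0 := by
    have : 0 < genLucasFun φ φ' ((m:ℝ) + 1) :=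
      add_pos (Real.rpow_pos_of_pos hφpos _) (Real.rpow_pos_of_pos hφ'pos _)
    exact this.ne'
  have hG : genFibFun φ φ' (2 * (m:ℝ) + 1) ≠ 0 :=
    (genFibFun_pos hφ'pos hlt (by positivity)).ne'
  have hP : (∏ j ∈ Finset.range m, (φ ^ ((j:ℝ) + 1/2) + φ' ^ ((j:ℝ) + 1/2))) ≠ 0 := by
    have : 0 < ∏ j ∈ Finset.range m, (φ ^ ((j:ℝ) + 1/2) + φ' ^ ((j:ℝ) + 1/2)) :=
      Finset.prod_pos fun j _ =>
        add_pos (Real.rpow_pos_of_pos hφpos _) (Real.rpow_pos_of_pos hφ'pos _)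
    exact this.ne'
  have h4 : (4:ℝ) ^ m ≠ 0 := by positivity
  field_simp
  ring
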